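/- The presented group ⟨m₁, m₂, b ∣ [m₂, m₁] = 1, b⁻¹m₁b = m₂, [m₂m₁, b] = 1⟩ is isomorphic to the presented group ⟨m₁, b ∣ [m₁, b²] = 1, [m₁, b m₁ b] = 1⟩, and both are isomorphic to the presented group ⟨m, b ∣ [m, b²] = 1, [m², b] = 1⟩ (an isomorphism to the last group being induced by m ↦ m₁b, b ↦ b). -/

import Mathlib

set_option linter.unusedTactic false

open scoped commutatorElement

/-- The relators of `⟨m₁, m₂, b ∣ [m₂, m₁] = 1, b⁻¹m₁b = m₂, [m₂m₁, b] = 1⟩`,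
with generators `m₁ = 0`, `m₂ = 1`, `b = 2`. -/
def relsA : Set (FreeGroup (Fin 3)) :=
  let m₁ : FreeGroup (Fin 3) := FreeGroup.of 0
  let m₂ : FreeGroup (Fin 3) := FreeGroup.of 1
  let b : FreeGroup (Fin 3) := FreeGroup.of 2
  { ⁅m₂, m₁⁆, b⁻¹ * m₁ * b * m₂⁻¹, ⁅m₂ * m₁, b⁆ }

/-- The relators of `⟨m₁, b ∣ [m₁, b²] = 1, [m₁, b m₁ b] = 1⟩`, with generators
`m₁ = 0`, `b = 1`. -/
def relsB : Set (FreeGroup (Fin 2)) :=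
  let m₁ : FreeGroup (Fin 2) := FreeGroup.of 0
  let b : FreeGroup (Fin 2) := FreeGroup.of 1
  { ⁅m₁, b ^ 2⁆, ⁅m₁, b * m₁ * b⁆ }

/-- The relators of `K₂ = ⟨m, b ∣ [m, b²] = 1, [m², b] = 1⟩`, with generators
`m = 0`, `b = 1`. -/
def relsK2 : Set (FreeGroup (Fin 2)) :=
  let m : FreeGroup (Fin 2) := FreeGroup.of 0
  let b : FreeGroup (Fin 2) := FreeGroup.of 1
  { ⁅m, b ^ 2⁆, ⁅m ^ 2, b⁆ }

open PresentedGroup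

private lemma mk_rel {α : Type*} {rels : Set (FreeGroup α)} {r : FreeGroup α} (hr : r ∈ rels) :
    mk rels r = 1 :=
  (QuotientGroup.eq_one_iff r).mpr (Subgroup.subset_normalClosure hr)

/-! ### relations in the presented groups -/

private lemma relB1 : (of 0 : PresentedGroup relsB) * of 1 ^ 2 = of 1 ^ 2 * of 0 := by
  have h := mk_rel (rels := relsB) (r := ⁅FreeGroup.of (0 : Fin 2), FreeGroup.of 1 ^ 2⁆) (by simp [relsB])
  rw [map_commutatorElement, commutatorElement_eq_one_iff_mul_comm, map_pow] at h
  exact h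

private lemma relB2 : (of 0 : PresentedGroup relsB) * (of 1 * of 0 * of 1)
    = (of 1 * of 0 * of 1) * of 0 := by
  have h := mk_rel (rels := relsB)
    (r := ⁅FreeGroup.of (0 : Fin 2), FreeGroup.of 1 * FreeGroup.of 0 * FreeGroup.of 1⁆) (by simp [relsB])
  rw [map_commutatorElement, commutatorElement_eq_one_iff_mul_comm, map_mul, map_mul] at h
  exact h

private lemma relA1 : (of 1 : PresentedGroup relsA) * of 0 = of 0 * of 1 := by
  have h := mk_rel (rels := relsA) (r := ⁅FreeGroup.of (1 : Fin 3), FreeGroup.of 0⁆) (by simp [relsA])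
  rw [map_commutatorElement, commutatorElement_eq_one_iff_mul_comm] at h
  exact h

private lemma relA2 : (of 2 : PresentedGroup relsA)⁻¹ * of 0 * of 2 = of 1 := by
  have h := mk_rel (rels := relsA)
    (r := (FreeGroup.of (2 : Fin 3))⁻¹ * FreeGroup.of 0 * FreeGroup.of 2 * (FreeGroup.of 1)⁻¹)
    (by simp [relsA])
  rw [map_mul, map_mul, map_mul, map_inv, map_inv] at h
  exact mul_inv_eq_one.mp h

private lemma relA3 : (of 1 : PresentedGroup relsA) * of 0 * of 2 = of 2 * (of 1 * of 0) := by
  have h := mk_rel (rels := relsA)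
    (r := ⁅FreeGroup.of (1 : Fin 3) * FreeGroup.of 0, FreeGroup.of 2⁆) (by simp [relsA])
  rw [map_commutatorElement, commutatorElement_eq_one_iff_mul_comm, map_mul] at h
  exact h

private lemma relK1 : (of 0 : PresentedGroup relsK2) * of 1 ^ 2 = of 1 ^ 2 * of 0 := by
  have h := mk_rel (rels := relsK2) (r := ⁅FreeGroup.of (0 : Fin 2), FreeGroup.of 1 ^ 2⁆) (by simp [relsK2])
  rw [map_commutatorElement, commutatorElement_eq_one_iff_mul_comm, map_pow] at h
  exact h

private lemma relK2 : (of 0 : PresentedGroup relsK2) ^ 2 * of 1 = of 1 * of 0 ^ 2 := by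
  have h := mk_rel (rels := relsK2) (r := ⁅FreeGroup.of (0 : Fin 2) ^ 2, FreeGroup.of 1⁆) (by simp [relsK2])
  rw [map_commutatorElement, commutatorElement_eq_one_iff_mul_comm, map_pow] at h
  exact h

/-! ### the homomorphisms -/

private lemma hfAB : ∀ r ∈ relsA,
    FreeGroup.lift ![of 0, (of 1)⁻¹ * of 0 * of 1, (of 1 : PresentedGroup relsB)] r = 1 := by
  intro r hr
  set x : PresentedGroup relsB := of 0 with hx
  set y : PresentedGroup relsB := of 1 with hy
  have c1 : x * y ^ 2 = y ^ 2 * x := relB1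
  have c2 : x * (y * x * y) = (y * x * y) * x := relB2
  simp only [relsA, Set.mem_insert_iff, Set.mem_singleton_iff] at hr
  rcases hr with rfl | rfl | rfl
  · rw [map_commutatorElement, commutatorElement_eq_one_iff_mul_comm]
    simp only [FreeGroup.lift_apply_of, Matrix.cons_val_zero, Matrix.cons_val_one, Matrix.head_cons]
    have h1 : Commute x (y ^ 2) := c1
    have h2 : Commute x (y * x * y) := c2
    have h3 : Commute x ((y ^ 2)⁻¹ * (y * x * y)) := (h1.inv_right).mul_right h2
    have e : (y ^ 2)⁻¹ * (y * x * y) = y⁻¹ * x * y := by (try simp only [pow_two]); group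
    rw [e] at h3
    exact h3.symm.eq
  · simp only [map_mul, map_inv, FreeGroup.lift_apply_of, Matrix.cons_val_zero, Matrix.cons_val_one,
      Matrix.head_cons, Matrix.cons_val_two, Matrix.tail_cons]
    group
  · rw [map_commutatorElement, commutatorElement_eq_one_iff_mul_comm, map_mul]
    simp only [FreeGroup.lift_apply_of, Matrix.cons_val_zero, Matrix.cons_val_one, Matrix.head_cons,
      Matrix.cons_val_two, Matrix.tail_cons]
    calc ((y⁻¹ * x * y) * x) * y = y⁻¹ * (x * (y * x * y)) := by (try simp only [pow_two]); group
      _ = y⁻¹ * ((y * x * y) * x) := by rw [c2]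
      _ = y * ((y⁻¹ * x * y) * x) := by (try simp only [pow_two]); group

private def fAB : PresentedGroup relsA →* PresentedGroup relsB := toGroup hfAB

private lemma hgBA : ∀ r ∈ relsB,
    FreeGroup.lift ![of 0, (of 2 : PresentedGroup relsA)] r = 1 := by
  intro r hr
  set p : PresentedGroup relsA := of 0 with hp
  set q : PresentedGroup relsA := of 1 with hq
  set s : PresentedGroup relsA := of 2 with hs
  have a1 : q * p = p * q := relA1
  have a2 : s⁻¹ * p * s = q := relA2
  have a3 : q * p * s = s * (q * p) := relA3
  have e2 : s⁻¹ * q * s = p := by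
    have h1 : s⁻¹ * (q * p) * s = q * p := by
      calc s⁻¹ * (q * p) * s = s⁻¹ * (q * p * s) := by (try simp only [pow_two]); group
        _ = s⁻¹ * (s * (q * p)) := by rw [a3]
        _ = q * p := by (try simp only [pow_two]); group
    calc s⁻¹ * q * s = (s⁻¹ * (q * p) * s) * (s⁻¹ * p * s)⁻¹ := by (try simp only [pow_two]); group
      _ = (q * p) * q⁻¹ := by rw [h1, a2]
      _ = (p * q) * q⁻¹ := by rw [a1]
      _ = p := by (try simp only [pow_two]); group
  have hps : p * s ^ 2 = s ^ 2 * p := by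
    have h : s⁻¹ * (s⁻¹ * p * s) * s = p := by rw [a2]; exact e2
    calc p * s ^ 2 = s ^ 2 * (s⁻¹ * (s⁻¹ * p * s) * s) := by (try simp only [pow_two]); group
      _ = s ^ 2 * p := by rw [h]
  simp only [relsB, Set.mem_insert_iff, Set.mem_singleton_iff] at hr
  rcases hr with rfl | rfl
  · rw [map_commutatorElement, commutatorElement_eq_one_iff_mul_comm, map_pow]
    simp only [FreeGroup.lift_apply_of, Matrix.cons_val_zero, Matrix.cons_val_one, Matrix.head_cons]
    exact hps
  · rw [map_commutatorElement, commutatorElement_eq_one_iff_mul_comm, map_mul, map_mul]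
    simp only [FreeGroup.lift_apply_of, Matrix.cons_val_zero, Matrix.cons_val_one, Matrix.head_cons]
    have hsq : s * p * s = s ^ 2 * q := by
      calc s * p * s = s ^ 2 * (s⁻¹ * p * s) := by (try simp only [pow_two]); group
        _ = s ^ 2 * q := by rw [a2]
    have hc : Commute p (s ^ 2 * q) :=
      Commute.mul_right (hps : Commute p (s ^ 2)) (a1.symm : Commute p q)
    rw [hsq]
    exact hc.eq

private def gBA : PresentedGroup relsB →* PresentedGroup relsA := toGroup hgBA

private lemma hfKB : ∀ r ∈ relsK2,
    FreeGroup.lift ![of 0 * of 1, (of 1 : PresentedGroup relsB)] r = 1 := by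
  intro r hr
  set x : PresentedGroup relsB := of 0 with hx
  set y : PresentedGroup relsB := of 1 with hy
  have c1 : x * y ^ 2 = y ^ 2 * x := relB1
  have c2 : x * (y * x * y) = (y * x * y) * x := relB2
  simp only [relsK2, Set.mem_insert_iff, Set.mem_singleton_iff] at hr
  rcases hr with rfl | rfl
  · rw [map_commutatorElement, commutatorElement_eq_one_iff_mul_comm, map_pow]
    simp only [FreeGroup.lift_apply_of, Matrix.cons_val_zero, Matrix.cons_val_one, Matrix.head_cons]
    calc (x * y) * y ^ 2 = (x * y ^ 2) * y := by (try simp only [pow_two]); group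
      _ = (y ^ 2 * x) * y := by rw [c1]
      _ = y ^ 2 * (x * y) := by (try simp only [pow_two]); group
  · rw [map_commutatorElement, commutatorElement_eq_one_iff_mul_comm, map_pow]
    simp only [FreeGroup.lift_apply_of, Matrix.cons_val_zero, Matrix.cons_val_one, Matrix.head_cons]
    calc (x * y) ^ 2 * y = (x * (y * x * y)) * y := by (try simp only [pow_two]); group
      _ = ((y * x * y) * x) * y := by rw [c2]
      _ = y * (x * y) ^ 2 := by (try simp only [pow_two]); group

private def fKB : PresentedGroup relsK2 →* PresentedGroup relsB := toGroup hfKB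

private lemma hgBK : ∀ r ∈ relsB,
    FreeGroup.lift ![of 0 * (of 1)⁻¹, (of 1 : PresentedGroup relsK2)] r = 1 := by
  intro r hr
  set u : PresentedGroup relsK2 := of 0 with hu
  set v : PresentedGroup relsK2 := of 1 with hv
  have k1 : u * v ^ 2 = v ^ 2 * u := relK1
  have k2 : u ^ 2 * v = v * u ^ 2 := relK2
  simp only [relsB, Set.mem_insert_iff, Set.mem_singleton_iff] at hr
  rcases hr with rfl | rfl
  · rw [map_commutatorElement, commutatorElement_eq_one_iff_mul_comm, map_pow]
    simp only [map_mul, map_inv, FreeGroup.lift_apply_of, Matrix.cons_val_zero, Matrix.cons_val_one,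
      Matrix.head_cons]
    calc (u * v⁻¹) * v ^ 2 = (u * v ^ 2) * v⁻¹ := by (try simp only [pow_two]); group
      _ = (v ^ 2 * u) * v⁻¹ := by rw [k1]
      _ = v ^ 2 * (u * v⁻¹) := by (try simp only [pow_two]); group
  · rw [map_commutatorElement, commutatorElement_eq_one_iff_mul_comm, map_mul, map_mul]
    simp only [map_mul, map_inv, FreeGroup.lift_apply_of, Matrix.cons_val_zero, Matrix.cons_val_one,
      Matrix.head_cons]
    calc (u * v⁻¹) * (v * (u * v⁻¹) * v) = (u ^ 2 * v) * v⁻¹ := by (try simp only [pow_two]); group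
      _ = (v * u ^ 2) * v⁻¹ := by rw [k2]
      _ = (v * (u * v⁻¹) * v) * (u * v⁻¹) := by (try simp only [pow_two]); group

private def gBK : PresentedGroup relsB →* PresentedGroup relsK2 := toGroup hgBK

/-! ### the isomorphisms -/

private def eAB : PresentedGroup relsA ≃* PresentedGroup relsB :=
  MonoidHom.toMulEquiv fAB gBA
    (by
      ext i
      fin_cases i <;> simp [fAB, gBA, toGroup.of]
      exact relA2)
    (by
      ext i
      fin_cases i <;> simp [fAB, gBA, toGroup.of, relA2])

private def eKB : PresentedGroup relsK2 ≃* PresentedGroup relsB :=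
  MonoidHom.toMulEquiv fKB gBK
    (by
      ext i
      fin_cases i <;> simp [fKB, gBK, toGroup.of])
    (by
      ext i
      fin_cases i <;> simp [fKB, gBK, toGroup.of])

/-- `⟨m₁, m₂, b ∣ [m₂, m₁] = 1, b⁻¹m₁b = m₂, [m₂m₁, b] = 1⟩` is
isomorphic to `⟨m₁, b ∣ [m₁, b²] = 1, [m₁, b m₁ b] = 1⟩`, and both are isomorphic to
`⟨m, b ∣ [m, b²] = 1, [m², b] = 1⟩`, an isomorphism to the last group being induced by
`m ↦ m₁b`, `b ↦ b`. -/
theorem presentations_isomorphic :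
    Nonempty (PresentedGroup relsA ≃* PresentedGroup relsB) ∧
    Nonempty (PresentedGroup relsA ≃* PresentedGroup relsK2) ∧
    ∃ e : PresentedGroup relsK2 ≃* PresentedGroup relsB,
      e (PresentedGroup.of 0) = PresentedGroup.of 0 * PresentedGroup.of 1 ∧
      e (PresentedGroup.of 1) = PresentedGroup.of 1 := by
  refine ⟨⟨eAB⟩, ⟨eAB.trans eKB.symm⟩, ⟨eKB, ?_, ?_⟩⟩
  · show fKB (of 0) = of 0 * of 1
    rw [fKB, toGroup.of]
    simp
  · show fKB (of 1) = of 1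
    rw [fKB, toGroup.of]
    simp
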